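/- Let Δ : ℤ → ℤ be 3-periodic, let P be a formal power series over ℤ, and let H : ℤ → ℤ[[t]] be a family of formal power series satisfying, for every n ∈ ℤ, H_n − Δ(−n)·t·H_{n+1} + Δ(−n−2)·t²·H_{n+2} − t³·H_{n+3} = P. Then H_{n+3} = H_n for all n ∈ ℤ. (Taking P = 1 − t³ gives the 3-periodicity of the relative Hilbert series of End(𝓔) of an elliptic helix, and taking P = 1 gives that of its quadratic cover 𝕊ⁿᶜ(𝓔).) -/

import Mathlib

open PowerSeries

/-- If `Δ : ℤ → ℤ` is 3-periodic, `P ∈ ℤ[[t]]`, and the family `H : ℤ → ℤ[[t]]`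
satisfies `H_n − Δ(−n)·t·H_{n+1} + Δ(−n−2)·t²·H_{n+2} − t³·H_{n+3} = P` for all `n`,
then `H_{n+3} = H_n` for all `n`. -/
theorem hilbert_series_three_periodic (Δ : ℤ → ℤ) (hper : ∀ n : ℤ, Δ (n + 3) = Δ n)
    (P : PowerSeries ℤ) (H : ℤ → PowerSeries ℤ)
    (hrec : ∀ n : ℤ,
      H n - C (Δ (-n)) * X * H (n + 1) + C (Δ (-n - 2)) * X ^ 2 * H (n + 2)
        - X ^ 3 * H (n + 3) = P) :
    ∀ n : ℤ, H (n + 3) = H n := by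
  set G : ℤ → PowerSeries ℤ := fun n => H (n + 3) - H n with hG
  have key : ∀ n : ℤ, G n = C (Δ (-n)) * (X * G (n + 1))
      - C (Δ (-n - 2)) * (X ^ 2 * G (n + 2)) + X ^ 3 * G (n + 3) := by
    intro n
    have h1 := hrec n
    have h2 := hrec (n + 3)
    have e1 : Δ (-(n + 3)) = Δ (-n) := by
      have := hper (-(n + 3)); rw [show -(n + 3) + 3 = -n by ring] at this
      exact this.symm
    have e2 : Δ (-(n + 3) - 2) = Δ (-n - 2) := by
      have := hper (-n - 5)
      have h5 : -n - 5 + 3 = -n - 2 := by ring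
      rw [h5] at this
      rw [show -(n + 3) - 2 = -n - 5 by ring, ← this]
    rw [e1, e2] at h2
    have h3 : G n - C (Δ (-n)) * X * G (n + 1) + C (Δ (-n - 2)) * X ^ 2 * G (n + 2)
        - X ^ 3 * G (n + 3) = 0 := by
      simp only [hG]
      have : (n + 3) + 1 = (n + 1) + 3 := by ring
      have h2' := h2
      rw [show (n + 3) + 1 = (n + 1) + 3 by ring, show (n + 3) + 2 = (n + 2) + 3 by ring,
        show (n + 3) + 3 = (n + 3) + 3 by ring] at h2'
      linear_combination h2' - h1
    linear_combination h3
  have hcoeff : ∀ k : ℕ, ∀ n : ℤ, coeff k (G n) = 0 := by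
    intro k
    induction k using Nat.strong_induction_on with
    | _ k ih =>
      intro n
      rw [key n]
      rw [map_add, map_sub, coeff_C_mul, coeff_C_mul]
      rw [show (X : PowerSeries ℤ) * G (n + 1) = X ^ 1 * G (n + 1) by ring]
      rw [coeff_X_pow_mul', coeff_X_pow_mul', coeff_X_pow_mul']
      have t1 : (if 1 ≤ k then coeff (k - 1) (G (n + 1)) else 0) = 0 := by
        split_ifs with h
        · exact ih _ (by omega) _
        · rfl
      have t2 : (if 2 ≤ k then coeff (k - 2) (G (n + 2)) else 0) = 0 := by
        split_ifs with h
        · exact ih _ (by omega) _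
        · rfl
      have t3 : (if 3 ≤ k then coeff (k - 3) (G (n + 3)) else 0) = 0 := by
        split_ifs with h
        · exact ih _ (by omega) _
        · rfl
      rw [t1, t2, t3]
      ring
  intro n
  have : G n = 0 := by
    ext k
    simp [hcoeff k n]
  have := this
  rw [hG] at this
  have := sub_eq_zero.mp (by simpa using this)
  simpa using this
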